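/- If the coordinates are connected (i.e., i ~ j holds for all i,j ∈ {1,…,n}), then there exists at least one index i that is strongly connected to every index j ≠ i. -/
import Mathlib


/-- If the coordinates are connected, then there exists at
least one index `i` that is strongly connected to every index `j ≠ i`. -/
theorem exists_strongly_connected_of_connected (n : ℕ) (hn : 3 ≤ n)
    (σ σ' : Fin n → Fin n → ℝ → ℝ)
    (hderiv : ∀ i j : Fin n, i ≠ j → ∀ x : ℝ, HasDerivAt (σ i j) (σ' i j x) x)
    (hne : ∀ i j : Fin n, i ≠ j → ∀ s t : ℝ, σ i j s + σ j i t ≠ 0)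
    (heq : ∀ i j k : Fin n, i ≠ j → j ≠ k → i ≠ k → ∀ s t u : ℝ,
      σ' j i t * σ' k i u * (σ j k t + σ k j u)
        - σ' j i t * σ' k j u * (σ k i u + σ i k s)
        - σ' k i u * σ' j k t * (σ i j s + σ j i t) = 0)
    (hconn : ∀ i j : Fin n,
      i = j ∨ ((∃ x, σ' i j x ≠ 0) ∨ (∃ x, σ' j i x ≠ 0)) ∨
        ∃ k, k ≠ i ∧ k ≠ j ∧ (∃ x, σ' k i x ≠ 0) ∧ (∃ x, σ' k j x ≠ 0)) :
    ∃ i : Fin n, ∀ j : Fin n, j ≠ i →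
      ((∃ x, σ' i j x ≠ 0) ∨ (∃ x, σ' j i x ≠ 0)) := by
  classical
  -- Transitivity of nonzero "arrows": if σ' k j ≢ 0 and σ' j i ≢ 0 then σ' k i ≢ 0.
  have trans : ∀ i j k : Fin n, i ≠ j → j ≠ k → i ≠ k →
      (∃ x, σ' k j x ≠ 0) → (∃ x, σ' j i x ≠ 0) → (∃ x, σ' k i x ≠ 0) := by
    intro i j k hij hjk hik hkj hji
    obtain ⟨u0, hu0⟩ := hkj
    obtain ⟨t0, ht0⟩ := hji
    by_contra h
    push_neg at h
    have hE := heq i j k hij hjk hik 0 t0 u0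
    rw [h u0] at hE
    have h2 : σ' j i t0 * σ' k j u0 * (σ k i u0 + σ i k 0) = 0 := by
      linarith [hE]
    have hs := hne k i (Ne.symm hik) u0 0
    rcases mul_eq_zero.mp h2 with h3 | h3
    · rcases mul_eq_zero.mp h3 with h4 | h4
      · exact ht0 h4
      · exact hu0 h4
    · exact hs h3
  -- The out-neighborhood of a vertex
  set N : Fin n → Finset (Fin n) :=
    fun v => Finset.univ.filter (fun w => v ≠ w ∧ ∃ x, σ' v w x ≠ 0) with hN
  have hmemN : ∀ v w, w ∈ N v ↔ (v ≠ w ∧ ∃ x, σ' v w x ≠ 0) := by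
    intro v w; simp [hN]
  haveI : Nonempty (Fin n) := ⟨⟨0, by omega⟩⟩
  obtain ⟨v, -, hv⟩ := Finset.exists_max_image Finset.univ
    (fun v => (N v).card) Finset.univ_nonempty
  refine ⟨v, ?_⟩
  intro m hmv
  by_contra hE
  push_neg at hE
  obtain ⟨hE1, hE2⟩ := hE
  rcases hconn v m with h | h | ⟨l, hlv, hlm, hl1, hl2⟩
  · exact hmv h.symm
  · rcases h with h | h
    · obtain ⟨x, hx⟩ := h; exact hx (hE1 x)
    · obtain ⟨x, hx⟩ := h; exact hx (hE2 x)
  -- l → v and l → m. Show N l ⊇ (N v \ {l}) ∪ {v, m}, contradicting maximality of v.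
  have hvnotinNv : v ∉ N v := by
    intro hmem; exact ((hmemN v v).mp hmem).1 rfl
  have hmnotinNv : m ∉ N v := by
    intro hmem
    obtain ⟨-, x, hx⟩ := (hmemN v m).mp hmem
    exact hx (hE1 x)
  have hsub : insert v (insert m ((N v).erase l)) ⊆ N l := by
    intro w hw
    rcases Finset.mem_insert.mp hw with rfl | hw
    · exact (hmemN l w).mpr ⟨hlv, hl1⟩
    rcases Finset.mem_insert.mp hw with rfl | hw
    · exact (hmemN l w).mpr ⟨hlm, hl2⟩
    · obtain ⟨hwl, hw⟩ := Finset.mem_erase.mp hw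
      obtain ⟨hvw, hvw'⟩ := (hmemN v w).mp hw
      exact (hmemN l w).mpr ⟨Ne.symm hwl, trans w v l (Ne.symm hvw) hlv.symm hwl hl1 hvw'⟩
  have hvni : v ∉ insert m ((N v).erase l) := by
    simp only [Finset.mem_insert, Finset.mem_erase]
    push_neg
    exact ⟨Ne.symm hmv, fun _ => hvnotinNv⟩
  have hmni : m ∉ (N v).erase l := fun h => hmnotinNv (Finset.mem_of_mem_erase h)
  have hcard1 : ((N v).erase l).card + 2 ≤ (N l).card := by
    have := Finset.card_le_card hsub
    rw [Finset.card_insert_of_notMem hvni, Finset.card_insert_of_notMem hmni] at this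
    omega
  have hcard2 : (N v).card - 1 ≤ ((N v).erase l).card := Finset.pred_card_le_card_erase
  have hcard3 : (N l).card ≤ (N v).card := hv l (Finset.mem_univ l)
  omega
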